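/- Let μ⁺, μ⁻ be given by a 2-additive decomposition in which a⁺_{j|k} = a⁻_{j|k} = 0 for all ordered pairs (j,k) with j ≠ k, a_j⁺ = a_j⁻ = a_j for all j ∈ J, and a_{jk}⁺ = a_{jk}⁻ = a_{jk} for all unordered pairs {j,k}, and assume Σ_{j∈J} a_j + Σ_{{j,k}⊆J} a_{jk} = 1 and a_j + Σ_{k∈C} a_{jk} ≥ 0 for every j ∈ J and every C ⊆ J∖{j}. Define μ : 2^J → ℝ by μ(C) = Σ_{j∈C} a_j + Σ_{{j,k}⊆C} a_{jk}, and let μ̂(C,D) = μ⁺(C,D) − μ⁻(C,D). Then μ(∅) = 0, μ(J) = 1, μ(A) ≤ μ(B) whenever A ⊆ B ⊆ J, and for every x ∈ [−1,1]^n, Ch^B(x,μ̂) = ∫₀¹ μ({j ∈ J : x_j > t}) dt − ∫₀¹ μ({j ∈ J : x_j < −t}) dt, i.e. the bipolar Choquet integral reduces to the symmetric Choquet integral with a common capacity μ. -/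

import Mathlib

/-- The bipolar Choquet integral of `x` with respect to `μ`:
`∫₀¹ μ({j : x j > t}, {j : x j < -t}) dt`. The same formula is used for
`Ch^B`, `Ch^{B+}` and `Ch^{B-}` (with `μ̂`, `μ⁺`, `μ⁻` respectively). -/
noncomputable def ChB {n : ℕ} (μ : Finset (Fin n) → Finset (Fin n) → ℝ)
    (x : Fin n → ℝ) : ℝ :=
  ∫ t in (0:ℝ)..1,
    μ (Finset.univ.filter (fun j => t < x j)) (Finset.univ.filter (fun j => x j < -t))

/-- Sum of a symmetric coefficient family over the unordered pairs `{j,k} ⊆ C`, `j ≠ k`. -/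
noncomputable def pairSum {n : ℕ} (a : Fin n → Fin n → ℝ) (C : Finset (Fin n)) : ℝ :=
  (∑ p ∈ C.offDiag, a p.1 p.2) / 2

/-- `μ⁺(C,D) = Σ_{j∈C} a_j⁺ + Σ_{{j,k}⊆C} a_{jk}⁺ + Σ_{j∈C,k∈D} a⁺_{j|k}`. -/
noncomputable def muPlus {n : ℕ} (ap : Fin n → ℝ) (aps apo : Fin n → Fin n → ℝ)
    (C D : Finset (Fin n)) : ℝ :=
  ∑ j ∈ C, ap j + pairSum aps C + ∑ j ∈ C, ∑ k ∈ D, apo j k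

/-- `μ⁻(C,D) = Σ_{j∈D} a_j⁻ + Σ_{{j,k}⊆D} a_{jk}⁻ + Σ_{j∈C,k∈D} a⁻_{j|k}`. -/
noncomputable def muMinus {n : ℕ} (am : Fin n → ℝ) (ams amo : Fin n → Fin n → ℝ)
    (C D : Finset (Fin n)) : ℝ :=
  ∑ j ∈ D, am j + pairSum ams D + ∑ j ∈ C, ∑ k ∈ D, amo j k

lemma pairSum_insert {n : ℕ} (as : Fin n → Fin n → ℝ) (hsym : ∀ j k, as j k = as k j)
    {j : Fin n} {C : Finset (Fin n)} (hj : j ∉ C) :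
    pairSum as (insert j C) = pairSum as C + ∑ k ∈ C, as j k := by
  unfold pairSum
  rw [Finset.offDiag_insert (s := C) (a := j) hj, Finset.sum_union, Finset.sum_union]
  · have h1 : ∑ p ∈ ({j} ×ˢ C), as p.1 p.2 = ∑ k ∈ C, as j k := by
      rw [Finset.sum_product, Finset.sum_singleton]
    have h2 : ∑ p ∈ (C ×ˢ {j}), as p.1 p.2 = ∑ k ∈ C, as j k := by
      rw [Finset.sum_product]
      simp only [Finset.sum_singleton]
      exact Finset.sum_congr rfl fun k _ => hsym k j
    rw [h1, h2]; ring
  · rw [Finset.disjoint_left]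
    intro p hp hq
    exact hj ((Finset.mem_singleton.1 (Finset.mem_product.1 hq).1) ▸ (Finset.mem_offDiag.1 hp).1)
  · refine Finset.disjoint_union_left.2 ⟨?_, ?_⟩
    · rw [Finset.disjoint_left]
      intro p hp hq
      exact hj ((Finset.mem_singleton.1 (Finset.mem_product.1 hq).2) ▸ (Finset.mem_offDiag.1 hp).2.1)
    · rw [Finset.disjoint_left]
      intro p hp hq
      exact hj ((Finset.mem_singleton.1 (Finset.mem_product.1 hp).1) ▸ (Finset.mem_product.1 hq).1)

theorem stmt_19 {n : ℕ} (hn : 1 ≤ n)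
    (a : Fin n → ℝ) (as : Fin n → Fin n → ℝ)
    (ha : ∀ j, 0 ≤ a j)
    (hsym : ∀ j k, as j k = as k j)
    (hnorm : ∑ j, a j + pairSum as Finset.univ = 1)
    (hmonocoef : ∀ (j : Fin n) (C : Finset (Fin n)), j ∉ C →
        0 ≤ a j + ∑ k ∈ C, as j k)
    (μ : Finset (Fin n) → ℝ)
    (hμdef : ∀ C : Finset (Fin n), μ C = ∑ j ∈ C, a j + pairSum as C) :
    μ ∅ = 0 ∧ μ Finset.univ = 1 ∧
    (∀ A B : Finset (Fin n), A ⊆ B → μ A ≤ μ B) ∧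
    (∀ x : Fin n → ℝ, (∀ j, x j ∈ Set.Icc (-1:ℝ) 1) →
      ChB (fun C D => muPlus a as (fun _ _ => 0) C D
          - muMinus a as (fun _ _ => 0) C D) x =
        (∫ t in (0:ℝ)..1, μ (Finset.univ.filter (fun j => t < x j)))
          - ∫ t in (0:ℝ)..1, μ (Finset.univ.filter (fun j => x j < -t))) := by
  classical
  have hins : ∀ (j : Fin n) (C : Finset (Fin n)), j ∉ C →
      μ (insert j C) = μ C + (a j + ∑ k ∈ C, as j k) := by
    intro j C hj
    rw [hμdef, hμdef, Finset.sum_insert hj, pairSum_insert as hsym hj]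
    ring
  have hmono : ∀ A B : Finset (Fin n), A ⊆ B → μ A ≤ μ B := by
    intro A B hAB
    have key : ∀ s : Finset (Fin n), μ A ≤ μ (A ∪ s) := by
      intro s
      induction s using Finset.induction_on with
      | empty => simp
      | @insert j s hjs' ih =>
        by_cases hjs : j ∈ A ∪ s
        · rwa [Finset.union_insert, Finset.insert_eq_self.mpr hjs]
        · rw [Finset.union_insert, hins j (A ∪ s) hjs]
          have := hmonocoef j (A ∪ s) hjs
          linarith
    have : A ∪ (B \ A) = B := Finset.union_sdiff_of_subset hAB
    calc μ A ≤ μ (A ∪ (B \ A)) := key _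
      _ = μ B := by rw [this]
  refine ⟨by simp [hμdef, pairSum], by rw [hμdef]; exact hnorm, hmono, ?_⟩
  intro x hx
  unfold ChB
  have heq : (fun t => muPlus a as (fun _ _ => 0)
        (Finset.univ.filter (fun j => t < x j)) (Finset.univ.filter (fun j => x j < -t))
      - muMinus a as (fun _ _ => 0)
        (Finset.univ.filter (fun j => t < x j)) (Finset.univ.filter (fun j => x j < -t)))
      = (fun t => μ (Finset.univ.filter (fun j => t < x j))
          - μ (Finset.univ.filter (fun j => x j < -t))) := by
    funext t
    simp [muPlus, muMinus, hμdef]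
  rw [heq]
  have hanti1 : AntitoneOn (fun t => μ (Finset.univ.filter (fun j => t < x j)))
      (Set.uIcc (0:ℝ) 1) := by
    intro s _ t _ hst
    refine hmono _ _ ?_
    intro j hj
    simp only [Finset.mem_filter] at hj ⊢
    exact ⟨hj.1, lt_of_le_of_lt hst hj.2⟩
  have hanti2 : AntitoneOn (fun t => μ (Finset.univ.filter (fun j => x j < -t)))
      (Set.uIcc (0:ℝ) 1) := by
    intro s _ t _ hst
    refine hmono _ _ ?_
    intro j hj
    simp only [Finset.mem_filter] at hj ⊢
    exact ⟨hj.1, lt_of_lt_of_le hj.2 (by linarith)⟩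
  exact intervalIntegral.integral_sub hanti1.intervalIntegrable hanti2.intervalIntegrable
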